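/- If G is a graph in W₂ and S is an independent set of G with |S| < α(G), then the localization G_S is again in W₂. -/

import Mathlib

open Finset

section EdgeIdealPaper

variable {V : Type*} [Fintype V] [DecidableEq V]

/-- `S` is an independent set of vertices in `G`. -/
def IsIndep (G : SimpleGraph V) (S : Finset V) : Prop :=
  ∀ u ∈ S, ∀ v ∈ S, ¬ G.Adj u v

/-- `S` is a maximal independent set of the induced subgraph of `G` on `A`. -/
def IsMaxIndepIn (G : SimpleGraph V) (A S : Finset V) : Prop :=
  S ⊆ A ∧ IsIndep G S ∧ ∀ v ∈ A, v ∉ S → ¬ IsIndep G (insert v S)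

open scoped Classical in
/-- The independence number of the induced subgraph of `G` on `A`. -/
noncomputable def alphaIn (G : SimpleGraph V) (A : Finset V) : ℕ :=
  ((A.powerset).filter (fun S => IsIndep G S)).sup Finset.card

/-- The induced subgraph of `G` on `A` is well-covered. -/
def WellCoveredIn (G : SimpleGraph V) (A : Finset V) : Prop :=
  ∀ S, IsMaxIndepIn G A S → S.card = alphaIn G A

/-- The induced subgraph of `G` on `A` is in the class `W₂`. -/
def W2In (G : SimpleGraph V) (A : Finset V) : Prop :=
  WellCoveredIn G A ∧
    ∀ x ∈ A, WellCoveredIn G (A.erase x) ∧ alphaIn G (A.erase x) = alphaIn G A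

open scoped Classical in
/-- The neighborhood of a vertex `a` in `G`, as a `Finset`. -/
noncomputable def nbr (G : SimpleGraph V) (a : V) : Finset V :=
  univ.filter (fun v => G.Adj a v)

open scoped Classical in
/-- The neighborhood `N_G(S)` of a set `S` of vertices: vertices outside `S`
adjacent to some vertex of `S`. -/
noncomputable def nbrSet (G : SimpleGraph V) (S : Finset V) : Finset V :=
  univ.filter (fun v => v ∉ S ∧ ∃ u ∈ S, G.Adj u v)

/-- The vertex set of the localization `G_S = G \ (S ∪ N_G(S))`. -/
noncomputable def loc (G : SimpleGraph V) (S : Finset V) : Finset V :=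
  univ \ (S ∪ nbrSet G S)

/-- The vertex set of `G_{ab} = G \ (N_G(a) ∪ N_G(b))`. -/
noncomputable def locE (G : SimpleGraph V) (a b : V) : Finset V :=
  univ \ (nbr G a ∪ nbr G b)

/-- The induced subgraph of `G` on `A` has no isolated vertices. -/
def NoIsolatedIn (G : SimpleGraph V) (A : Finset V) : Prop :=
  ∀ v ∈ A, ∃ u ∈ A, G.Adj v u

open scoped Classical in
/-- The reduced Euler characteristic `∑_{F} (-1)^{|F|-1}` (the empty face
contributing `-1`) of the independence complex of the induced subgraph of `G` on `A`. -/
noncomputable def indEuler (G : SimpleGraph V) (A : Finset V) : ℤ :=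
  -∑ S ∈ (A.powerset).filter (fun S => IsIndep G S), (-1 : ℤ) ^ S.card

end EdgeIdealPaper

section EdgeIdealPaper

variable {V : Type*} [Fintype V] [DecidableEq V]

lemma isIndep_subset {G : SimpleGraph V} {S T : Finset V} (h : T ⊆ S) (hS : IsIndep G S) :
    IsIndep G T := fun u hu v hv => hS u (h hu) v (h hv)

lemma card_le_alphaIn {G : SimpleGraph V} {A S : Finset V} (hSA : S ⊆ A) (hS : IsIndep G S) :
    S.card ≤ alphaIn G A := by
  classical
  unfold alphaIn
  exact Finset.le_sup (by simp [Finset.mem_filter, Finset.mem_powerset, hSA, hS])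

lemma exists_maxIndep_extend (G : SimpleGraph V) (A : Finset V) :
    ∀ n T, (A \ T).card ≤ n → T ⊆ A → IsIndep G T →
      ∃ M, T ⊆ M ∧ IsMaxIndepIn G A M := by
  intro n
  induction n with
  | zero =>
    intro T hc hTA hT
    refine ⟨T, subset_rfl, hTA, hT, ?_⟩
    intro v hvA hvT _
    have : v ∈ A \ T := Finset.mem_sdiff.mpr ⟨hvA, hvT⟩
    have hpos : 0 < (A \ T).card := Finset.card_pos.mpr ⟨v, this⟩
    omega
  | succ n ih =>
    intro T hc hTA hT
    by_cases h : ∀ v ∈ A, v ∉ T → ¬ IsIndep G (insert v T)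
    · exact ⟨T, subset_rfl, hTA, hT, h⟩
    · push_neg at h
      obtain ⟨v, hvA, hvT, hvind⟩ := h
      have hsub : A \ insert v T = (A \ T).erase v := by
        ext w; simp [Finset.mem_sdiff, Finset.mem_erase, Finset.mem_insert]; tauto
      have hmem : v ∈ A \ T := Finset.mem_sdiff.mpr ⟨hvA, hvT⟩
      have hlt : (A \ insert v T).card ≤ n := by
        rw [hsub, Finset.card_erase_of_mem hmem]
        omega
      obtain ⟨M, hM1, hM2⟩ := ih (insert v T) hlt
        (Finset.insert_subset hvA hTA) hvind
      exact ⟨M, (Finset.subset_insert v T).trans hM1, hM2⟩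

lemma exists_card_eq_alphaIn (G : SimpleGraph V) (A : Finset V) :
    ∃ M, M ⊆ A ∧ IsIndep G M ∧ M.card = alphaIn G A := by
  classical
  have hne : ((A.powerset).filter (fun S => IsIndep G S)).Nonempty :=
    ⟨∅, Finset.mem_filter.mpr ⟨Finset.empty_mem_powerset A, by simp [IsIndep]⟩⟩
  obtain ⟨M, hM, hMc⟩ := Finset.exists_mem_eq_sup _ hne Finset.card
  simp only [Finset.mem_filter, Finset.mem_powerset] at hM
  refine ⟨M, hM.1, hM.2, ?_⟩
  unfold alphaIn
  exact hMc.symm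

/-- Key lemma: localizing a well-covered induced subgraph at an independent set `S`
yields a well-covered induced subgraph whose independence number drops by `|S|`. -/
lemma key_loc (G : SimpleGraph V) (A S : Finset V) (hSA : S ⊆ A) (hS : IsIndep G S)
    (hwc : WellCoveredIn G A) :
    WellCoveredIn G (A \ (S ∪ nbrSet G S)) ∧
      alphaIn G (A \ (S ∪ nbrSet G S)) + S.card = alphaIn G A := by
  classical
  set A' := A \ (S ∪ nbrSet G S) with hA'
  -- basic facts about members of A'
  have hA'mem : ∀ t ∈ A', t ∈ A ∧ t ∉ S ∧ ∀ u ∈ S, ¬ G.Adj u t := by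
    intro t ht
    rw [hA', Finset.mem_sdiff, Finset.mem_union] at ht
    obtain ⟨htA, htn⟩ := ht
    push_neg at htn
    obtain ⟨htS, htN⟩ := htn
    refine ⟨htA, htS, ?_⟩
    intro u hu hadj
    exact htN (by simp [nbrSet, htS]; exact ⟨u, hu, hadj⟩)
  -- union with S of an independent subset of A' is independent
  have hunion_indep : ∀ T ⊆ A', IsIndep G T → IsIndep G (S ∪ T) := by
    intro T hTA' hT u hu v hv hadj
    rw [Finset.mem_union] at hu hv
    rcases hu with hu | hu <;> rcases hv with hv | hv
    · exact hS u hu v hv hadj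
    · exact (hA'mem v (hTA' hv)).2.2 u hu hadj
    · exact (hA'mem u (hTA' hu)).2.2 v hv hadj.symm
    · exact hT u hu v hv hadj
  -- maximal in A' lifts to maximal in A
  have hlift : ∀ T, IsMaxIndepIn G A' T → IsMaxIndepIn G A (S ∪ T) := by
    intro T ⟨hTA', hT, hTmax⟩
    refine ⟨Finset.union_subset hSA (hTA'.trans (Finset.sdiff_subset)), hunion_indep T hTA' hT, ?_⟩
    intro v hvA hvST hvind
    rw [Finset.mem_union] at hvST
    push_neg at hvST
    obtain ⟨hvS, hvT⟩ := hvST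
    -- v is not adjacent to any vertex of S:
    have hvnadj : ∀ u ∈ S, ¬ G.Adj u v := by
      intro u hu hadj
      exact hvind v (Finset.mem_insert_self _ _) u
        (Finset.mem_insert_of_mem (Finset.mem_union_left _ hu)) hadj.symm
    have hvA' : v ∈ A' := by
      rw [hA', Finset.mem_sdiff, Finset.mem_union]
      refine ⟨hvA, ?_⟩
      push_neg
      refine ⟨hvS, ?_⟩
      simp only [nbrSet, Finset.mem_filter, Finset.mem_univ, true_and]
      push_neg
      intro _; exact hvnadj
    refine hTmax v hvA' hvT (isIndep_subset ?_ hvind)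
    exact Finset.insert_subset_insert _ (Finset.subset_union_right)
  -- disjointness
  have hdisj : ∀ T ⊆ A', Disjoint S T := by
    intro T hTA'
    refine Finset.disjoint_left.mpr fun a haS haT => (hA'mem a (hTA' haT)).2.1 haS
  -- every maximal independent set T of A' satisfies |T| + |S| = α(A)
  have hmaxcard : ∀ T, IsMaxIndepIn G A' T → T.card + S.card = alphaIn G A := by
    intro T hT
    have := hwc _ (hlift T hT)
    rw [Finset.card_union_of_disjoint (hdisj T hT.1)] at this
    omega
  -- α(A') + |S| = α(A)
  obtain ⟨M, _, hMmax⟩ := exists_maxIndep_extend G A' ((A' \ ∅).card) ∅ le_rfl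
    (Finset.empty_subset _) (by intro u hu; simp at hu)
  have hMeq : M.card + S.card = alphaIn G A := hmaxcard M hMmax
  have hle : alphaIn G A' + S.card ≤ alphaIn G A := by
    obtain ⟨T, hTA', hTind, hTcard⟩ := exists_card_eq_alphaIn G A'
    have : (S ∪ T).card ≤ alphaIn G A :=
      card_le_alphaIn (Finset.union_subset hSA (hTA'.trans Finset.sdiff_subset))
        (hunion_indep T hTA' hTind)
    rw [Finset.card_union_of_disjoint (hdisj T hTA')] at this
    omega
  have hge : alphaIn G A ≤ alphaIn G A' + S.card := by
    have := card_le_alphaIn hMmax.1 hMmax.2.1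
    omega
  have halpha : alphaIn G A' + S.card = alphaIn G A := le_antisymm hle hge
  refine ⟨?_, halpha⟩
  intro T hT
  have := hmaxcard T hT
  omega

/-- If `G ∈ W₂` and `S` is an independent set with `|S| < α(G)`, then `G_S ∈ W₂`. -/
theorem stmt6 (G : SimpleGraph V) (hw2 : W2In G Finset.univ)
    (S : Finset V) (hS : IsIndep G S) (hcard : S.card < alphaIn G Finset.univ) :
    W2In G (loc G S) := by
  classical
  obtain ⟨hwc, hdel⟩ := hw2
  have hloc : loc G S = Finset.univ \ (S ∪ nbrSet G S) := rfl
  obtain ⟨h1, h2⟩ := key_loc G Finset.univ S (Finset.subset_univ S) hS hwc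
  refine ⟨h1, ?_⟩
  intro x hx
  rw [hloc, Finset.mem_sdiff, Finset.mem_union] at hx
  push_neg at hx
  obtain ⟨-, hxS, hxN⟩ := hx
  obtain ⟨hwcx, halphax⟩ := hdel x (Finset.mem_univ x)
  have hSsub : S ⊆ Finset.univ.erase x :=
    fun s hs => Finset.mem_erase.mpr ⟨fun h => hxS (h ▸ hs), Finset.mem_univ s⟩
  obtain ⟨h1x, h2x⟩ := key_loc G (Finset.univ.erase x) S hSsub hS hwcx
  have hset : Finset.univ.erase x \ (S ∪ nbrSet G S) = (loc G S).erase x := by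
    ext w
    simp only [loc, Finset.mem_erase, Finset.mem_sdiff, Finset.mem_univ, true_and,
      Finset.mem_union]
    tauto
  rw [hset] at h1x h2x
  rw [← hloc] at h2
  refine ⟨h1x, ?_⟩
  omega

end EdgeIdealPaper
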